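/- arXiv:1508.01846 — 7 statements merged into one kernel-verified Lean document; each statement's English description precedes it below -/
import Mathlib

section
/- Let F, H : ℝ^N → ℝ be twice continuously differentiable, k : ℝ → ℝ^N a differentiable curve and λ : ℝ → ℝ a differentiable function such that for all h in an open interval I: ∇F(k(h)) = λ(h) · ∇H(k(h)) and H(k(h)) = h. Let M(h) be the Hessian of F − λ(h)·H at k(h) and R(h) = ∇H(k(h)), and assume M(h) is invertible with ⟨R(h), M(h)⁻¹ R(h)⟩ ≠ 0. Then λ'(h) = 1 / ⟨R(h), M(h)⁻¹ R(h)⟩, and setting f(h) = F(k(h)), the second derivative satisfies f''(h) = λ'(h). -/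
/-- The Hessian matrix of `G : ℝ^N → ℝ` at `x`, with entries `∂²G/∂k_i∂k_j`. -/
noncomputable def hessianMatrix {N : ℕ} (G : EuclideanSpace ℝ (Fin N) → ℝ)
    (x : EuclideanSpace ℝ (Fin N)) : Matrix (Fin N) (Fin N) ℝ :=
  Matrix.of fun i j =>
    fderiv ℝ (fun y => fderiv ℝ G y (EuclideanSpace.single j 1)) x (EuclideanSpace.single i 1)

private lemma grad_component {N : ℕ} (f : EuclideanSpace ℝ (Fin N) → ℝ)
    (x : EuclideanSpace ℝ (Fin N)) (j : Fin N) :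
    gradient f x j = fderiv ℝ f x (EuclideanSpace.single j 1) := by
  have h : (inner ℝ (gradient f x) (EuclideanSpace.single j 1) : ℝ)
      = fderiv ℝ f x (EuclideanSpace.single j 1) := by
    rw [gradient]; exact InnerProductSpace.toDual_symm_apply
  rw [← h, real_inner_comm, EuclideanSpace.inner_single_left]
  simp

private lemma clm_apply_sum {N : ℕ} (L : EuclideanSpace ℝ (Fin N) →L[ℝ] ℝ)
    (w : EuclideanSpace ℝ (Fin N)) :
    L w = ∑ i, w i * L (EuclideanSpace.single i 1) := by
  have hw : w = ∑ i, w i • EuclideanSpace.single i (1:ℝ) := by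
    have := (EuclideanSpace.basisFun (Fin N) ℝ).sum_repr w
    simp only [EuclideanSpace.basisFun_apply, EuclideanSpace.basisFun_repr] at this
    exact this.symm
  conv_lhs => rw [hw]
  simp [map_sum, map_smul, smul_eq_mul]

/-- Along an h-parametrized Lagrange solution curve
(`∇F(k h) = λ(h) • ∇H(k h)` and `H(k h) = h`), with `M(h)` the Hessian of
`F − λ(h)·H` at `k h` and `R(h) = ∇H(k h)`, if `M(h)` is invertible and
`⟨R(h), M(h)⁻¹ R(h)⟩ ≠ 0`, then `λ'(h) = 1 / ⟨R(h), M(h)⁻¹ R(h)⟩` and,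
with `f(h) = F(k h)`, `f''(h) = λ'(h)`. -/
theorem deriv_lambda_eq_inv_RMinvR {N : ℕ}
    (F H : EuclideanSpace ℝ (Fin N) → ℝ)
    (hF : ContDiff ℝ 2 F) (hH : ContDiff ℝ 2 H)
    (k : ℝ → EuclideanSpace ℝ (Fin N)) (hk : Differentiable ℝ k)
    (lam : ℝ → ℝ) (hlam : Differentiable ℝ lam)
    (a b : ℝ)
    (hLag : ∀ h ∈ Set.Ioo a b, gradient F (k h) = lam h • gradient H (k h))
    (hcon : ∀ h ∈ Set.Ioo a b, H (k h) = h) :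
    ∀ h ∈ Set.Ioo a b,
      (hessianMatrix (fun x => F x - lam h * H x) (k h)).det ≠ 0 →
      dotProduct ((gradient H (k h) : EuclideanSpace ℝ (Fin N)) : Fin N → ℝ)
          ((hessianMatrix (fun x => F x - lam h * H x) (k h))⁻¹.mulVec
            ((gradient H (k h) : EuclideanSpace ℝ (Fin N)) : Fin N → ℝ)) ≠ 0 →
      deriv lam h =
        1 / dotProduct ((gradient H (k h) : EuclideanSpace ℝ (Fin N)) : Fin N → ℝ)
          ((hessianMatrix (fun x => F x - lam h * H x) (k h))⁻¹.mulVec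
            ((gradient H (k h) : EuclideanSpace ℝ (Fin N)) : Fin N → ℝ)) ∧
      deriv (deriv (fun s => F (k s))) h = deriv lam h := by
  intro h₀ hmem hdet hS
  classical
  have hFd : Differentiable ℝ F := hF.differentiable two_ne_zero
  have hHd : Differentiable ℝ H := hH.differentiable two_ne_zero
  have hF1 : ContDiff ℝ 1 (fderiv ℝ F) := hF.fderiv_right (by norm_num)
  have hH1 : ContDiff ℝ 1 (fderiv ℝ H) := hH.fderiv_right (by norm_num)
  set e : Fin N → EuclideanSpace ℝ (Fin N) := fun j => EuclideanSpace.single j 1 with he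
  have hφF : ∀ j, Differentiable ℝ (fun y => fderiv ℝ F y (e j)) :=
    fun j => (hF1.differentiable one_ne_zero).clm_apply (differentiable_const _)
  have hφH : ∀ j, Differentiable ℝ (fun y => fderiv ℝ H y (e j)) :=
    fun j => (hH1.differentiable one_ne_zero).clm_apply (differentiable_const _)
  set x₀ := k h₀ with hx₀
  set c := lam h₀ with hc
  set v := deriv k h₀ with hv
  have hkd : HasDerivAt k v h₀ := (hk h₀).hasDerivAt
  set lam' := deriv lam h₀ with hlam'
  set R : Fin N → ℝ := ((gradient H (k h₀) : EuclideanSpace ℝ (Fin N)) : Fin N → ℝ) with hR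
  set M := hessianMatrix (fun x => F x - c * H x) x₀ with hM
  -- components of R
  have hRj : ∀ j, R j = fderiv ℝ H x₀ (e j) := fun j => grad_component H x₀ j
  -- matrix entries
  have hHessEntry : ∀ i j, M i j =
      fderiv ℝ (fun y => fderiv ℝ F y (e j)) x₀ (e i)
        - c * fderiv ℝ (fun y => fderiv ℝ H y (e j)) x₀ (e i) := by
    intro i j
    have hfun : (fun y => fderiv ℝ (fun x => F x - c * H x) y (e j))
        = fun y => fderiv ℝ F y (e j) - c * fderiv ℝ H y (e j) := by
      funext y
      rw [fderiv_fun_sub (hFd y) ((hHd y).const_mul c), fderiv_const_mul (hHd y) c]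
      simp
    rw [hM]
    show fderiv ℝ (fun y => fderiv ℝ (fun x => F x - c * H x) y (e j)) x₀ (e i) = _
    rw [hfun, fderiv_fun_sub (hφF j x₀) ((hφH j x₀).const_mul c),
      fderiv_const_mul (hφH j x₀) c]
    simp
  -- the key vector equation: vecMul v M = lam' • R
  have hVec : Matrix.vecMul (v : Fin N → ℝ) M = lam' • R := by
    funext j
    have hPj : HasDerivAt (fun s => fderiv ℝ F (k s) (e j))
        (fderiv ℝ (fun y => fderiv ℝ F y (e j)) x₀ v) h₀ :=
      (hφF j x₀).hasFDerivAt.comp_hasDerivAt h₀ hkd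
    have hQj : HasDerivAt (fun s => fderiv ℝ H (k s) (e j))
        (fderiv ℝ (fun y => fderiv ℝ H y (e j)) x₀ v) h₀ :=
      (hφH j x₀).hasFDerivAt.comp_hasDerivAt h₀ hkd
    have hRHS : HasDerivAt (fun s => lam s * fderiv ℝ H (k s) (e j))
        (lam' * fderiv ℝ H x₀ (e j)
          + c * fderiv ℝ (fun y => fderiv ℝ H y (e j)) x₀ v) h₀ :=
      ((hlam h₀).hasDerivAt).mul hQj
    have hEq : (fun s => fderiv ℝ F (k s) (e j))
        =ᶠ[nhds h₀] fun s => lam s * fderiv ℝ H (k s) (e j) := by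
      filter_upwards [Ioo_mem_nhds hmem.1 hmem.2] with s hs
      have h1 := grad_component F (k s) j
      have h2 := grad_component H (k s) j
      rw [← h1, ← h2, hLag s hs]
      simp
    have hKey := (hPj.congr_of_eventuallyEq hEq.symm).unique hRHS
    have hAj : fderiv ℝ (fun y => fderiv ℝ F y (e j)) x₀ v
        = ∑ i, v i * fderiv ℝ (fun y => fderiv ℝ F y (e j)) x₀ (e i) :=
      clm_apply_sum _ v
    have hBj : fderiv ℝ (fun y => fderiv ℝ H y (e j)) x₀ v
        = ∑ i, v i * fderiv ℝ (fun y => fderiv ℝ H y (e j)) x₀ (e i) :=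
      clm_apply_sum _ v
    have : Matrix.vecMul (v : Fin N → ℝ) M j = ∑ i, v i * M i j := by
      simp [Matrix.vecMul, dotProduct]
    rw [this]
    have hsum : ∑ i, v i * M i j
        = fderiv ℝ (fun y => fderiv ℝ F y (e j)) x₀ v
          - c * fderiv ℝ (fun y => fderiv ℝ H y (e j)) x₀ v := by
      rw [hAj, hBj, Finset.mul_sum, ← Finset.sum_sub_distrib]
      exact Finset.sum_congr rfl fun i _ => by rw [hHessEntry i j]; ring
    rw [hsum, hKey, Pi.smul_apply, smul_eq_mul, hRj j]
    ring
  -- the constraint derivative: v ⬝ᵥ R = 1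
  have hdot : dotProduct (v : Fin N → ℝ) R = 1 := by
    have hDH : HasDerivAt (fun s => H (k s)) (fderiv ℝ H x₀ v) h₀ :=
      ((hHd x₀).hasFDerivAt).comp_hasDerivAt h₀ hkd
    have hid : HasDerivAt (fun s => H (k s)) 1 h₀ := by
      apply (hasDerivAt_id h₀).congr_of_eventuallyEq
      filter_upwards [Ioo_mem_nhds hmem.1 hmem.2] with s hs
      exact hcon s hs
    have h1 : fderiv ℝ H x₀ v = 1 := hDH.unique hid
    have h2 : fderiv ℝ H x₀ v = ∑ j, v j * fderiv ℝ H x₀ (e j) := clm_apply_sum _ v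
    rw [dotProduct]
    rw [h2] at h1
    rw [← h1]
    exact Finset.sum_congr rfl fun j _ => by rw [hRj j]
  -- matrix algebra
  have hu : IsUnit M.det := isUnit_iff_ne_zero.mpr hdet
  have hvEq : (v : Fin N → ℝ) = Matrix.vecMul (lam' • R) M⁻¹ := by
    rw [← hVec, Matrix.vecMul_vecMul, Matrix.mul_nonsing_inv _ hu, Matrix.vecMul_one]
  have hmain : lam' * dotProduct R (M⁻¹.mulVec R) = 1 := by
    have := hdot
    rw [hvEq] at this
    rw [Matrix.dotProduct_mulVec]
    calc lam' * (dotProduct (Matrix.vecMul R M⁻¹) R)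
        = dotProduct (Matrix.vecMul (lam' • R) M⁻¹) R := by
          rw [Matrix.smul_vecMul, smul_dotProduct]; ring_nf
      _ = 1 := this
  constructor
  · rw [eq_div_iff hS]
    exact hmain
  · -- second part: f' = lam on Ioo, hence f'' = lam'
    have hfd' : ∀ s ∈ Set.Ioo a b, deriv (fun t => F (k t)) s = lam s := by
      intro s hs
      have hks : HasDerivAt k (deriv k s) s := (hk s).hasDerivAt
      have hDF : HasDerivAt (fun t => F (k t)) (fderiv ℝ F (k s) (deriv k s)) s :=
        ((hFd (k s)).hasFDerivAt).comp_hasDerivAt s hks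
      have hDH : HasDerivAt (fun t => H (k t)) (fderiv ℝ H (k s) (deriv k s)) s :=
        ((hHd (k s)).hasFDerivAt).comp_hasDerivAt s hks
      have hid : HasDerivAt (fun t => H (k t)) 1 s := by
        apply (hasDerivAt_id s).congr_of_eventuallyEq
        filter_upwards [Ioo_mem_nhds hs.1 hs.2] with t ht
        exact hcon t ht
      have h1 : fderiv ℝ H (k s) (deriv k s) = 1 := hDH.unique hid
      have h2 : fderiv ℝ F (k s) (deriv k s) = lam s := by
        rw [clm_apply_sum (fderiv ℝ F (k s)) (deriv k s)]
        have : ∀ j, fderiv ℝ F (k s) (e j) = lam s * fderiv ℝ H (k s) (e j) := by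
          intro j
          rw [← grad_component F (k s) j, ← grad_component H (k s) j, hLag s hs]
          simp
        calc ∑ i, deriv k s i * fderiv ℝ F (k s) (e i)
            = lam s * ∑ i, deriv k s i * fderiv ℝ H (k s) (e i) := by
              rw [Finset.mul_sum]
              exact Finset.sum_congr rfl fun i _ => by rw [this i]; ring
          _ = lam s := by rw [← clm_apply_sum (fderiv ℝ H (k s)) (deriv k s), h1, mul_one]
      rw [hDF.deriv, h2]
    have hEv : deriv (fun t => F (k t)) =ᶠ[nhds h₀] lam := by
      filter_upwards [Ioo_mem_nhds hmem.1 hmem.2] with s hs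
      exact hfd' s hs
    exact hEv.deriv_eq
end

section
/- Let F, H : ℝ^N → ℝ be twice continuously differentiable, k : ℝ → ℝ^N a differentiable curve and μ : ℝ → ℝ a differentiable function such that for all f in an open interval I: ∇H(k(f)) = μ(f) · ∇F(k(f)) and F(k(f)) = f. Let N(f) be the Hessian of H − μ(f)·F at k(f) and S(f) = ∇F(k(f)), and assume N(f) is invertible with ⟨S(f), N(f)⁻¹ S(f)⟩ ≠ 0. Then μ'(f) = 1 / ⟨S(f), N(f)⁻¹ S(f)⟩, and setting h(f) = H(k(f)), the second derivative satisfies h''(f) = μ'(f). -/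
/-- View a vector of `ℝ^N` (Euclidean space) as a plain tuple `Fin N → ℝ`. -/
def toVec {N : ℕ} (v : EuclideanSpace ℝ (Fin N)) : Fin N → ℝ := v

open InnerProductSpace

section Aux
variable {N : ℕ}

local notation "E" => EuclideanSpace ℝ (Fin N)

private lemma fderiv_eq_inner' (G : E → ℝ) (x v : E) :
    fderiv ℝ G x v = ⟪gradient G x, v⟫_ℝ := by
  have : toDual ℝ E (gradient G x) = fderiv ℝ G x := by
    rw [gradient, (toDual ℝ E).apply_symm_apply]
  rw [← this, toDual_apply_apply]

private lemma gradient_coord' (G : E → ℝ) (x : E) (j : Fin N) :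
    gradient G x j = fderiv ℝ G x (EuclideanSpace.single j 1) := by
  rw [fderiv_eq_inner']
  simp [EuclideanSpace.inner_single_right (𝕜 := ℝ) j 1 (gradient G x)]

private lemma differentiable_gradient' {G : E → ℝ} (hG : ContDiff ℝ 2 G) :
    Differentiable ℝ (gradient G) := by
  have h1 : Differentiable ℝ (fderiv ℝ G) :=
    (hG.fderiv_right (m := 1) (by norm_num)).differentiable (by norm_num)
  have : gradient G = fun y => (toDual ℝ E).symm (fderiv ℝ G y) := rfl
  rw [this]
  exact ((toDual ℝ E).symm.toContinuousLinearEquiv : _ ≃L[ℝ] E).differentiable.comp h1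

private lemma fderiv_gradient_coord' {G : E → ℝ} (hG : ContDiff ℝ 2 G) (x u : E) (j : Fin N) :
    fderiv ℝ (gradient G) x u j
      = fderiv ℝ (fun y => fderiv ℝ G y (EuclideanSpace.single j 1)) x u := by
  have hdg : DifferentiableAt ℝ (gradient G) x := (differentiable_gradient' hG) x
  have hco : (fun y => fderiv ℝ G y (EuclideanSpace.single j 1))
      = (EuclideanSpace.proj j : E →L[ℝ] ℝ) ∘ gradient G := by
    funext y
    simp [Function.comp, gradient_coord']
  rw [hco]
  have := ((EuclideanSpace.proj j : E →L[ℝ] ℝ).hasFDerivAt.comp x hdg.hasFDerivAt).fderiv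
  rw [this]
  rfl

private lemma euclid_sum_single' (v : E) :
    v = ∑ i, (v i : ℝ) • EuclideanSpace.single i (1:ℝ) := by
  ext j
  have h1 : (∑ i, (v i : ℝ) • EuclideanSpace.single i (1:ℝ)) j
      = ∑ i, (v i • EuclideanSpace.single i (1:ℝ)) j := by
    rw [WithLp.ofLp_sum, Finset.sum_apply]
  rw [h1]
  simp [EuclideanSpace.single_apply]

private lemma hess_row' {G : E → ℝ} (hG : ContDiff ℝ 2 G) (x v : E) (j : Fin N) :
    fderiv ℝ (gradient G) x v j
      = Matrix.vecMul (toVec v) (hessianMatrix G x) j := by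
  conv_lhs => rw [euclid_sum_single' v]
  rw [map_sum]
  have h1 : (∑ i, fderiv ℝ (gradient G) x ((v i : ℝ) • EuclideanSpace.single i (1:ℝ))) j
      = ∑ i, (fderiv ℝ (gradient G) x ((v i : ℝ) • EuclideanSpace.single i (1:ℝ))) j := by
    rw [WithLp.ofLp_sum, Finset.sum_apply]
  rw [h1]
  have h2 : ∀ i, (fderiv ℝ (gradient G) x ((v i : ℝ) • EuclideanSpace.single i (1:ℝ))) j
      = v i * (hessianMatrix G x) i j := by
    intro i
    rw [map_smul]
    have : ((v i : ℝ) • fderiv ℝ (gradient G) x (EuclideanSpace.single i (1:ℝ))) j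
        = v i * (fderiv ℝ (gradient G) x (EuclideanSpace.single i (1:ℝ))) j := rfl
    rw [this, fderiv_gradient_coord' hG]
    rfl
  rw [Finset.sum_congr rfl (fun i _ => h2 i)]
  rfl

private lemma gradient_sub_smul' {Hf Ff : E → ℝ} (hH : Differentiable ℝ Hf)
    (hF : Differentiable ℝ Ff) (c : ℝ) (y : E) :
    gradient (fun z => Hf z - c * Ff z) y = gradient Hf y - c • gradient Ff y := by
  have hfd : fderiv ℝ (fun z => Hf z - c * Ff z) y = fderiv ℝ Hf y - c • fderiv ℝ Ff y := by
    rw [fderiv_fun_sub (hH y) ((hF y).const_mul c), fderiv_const_mul (hF y) c]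
  rw [gradient, hfd, map_sub, map_smul]
  rfl

end Aux

/-- Along an f-parametrized conjugate Lagrange solution curve
(`∇H(k f) = μ(f) • ∇F(k f)` and `F(k f) = f`), with `N(f)` the Hessian of
`H − μ(f)·F` at `k f` and `S(f) = ∇F(k f)`, if `N(f)` is invertible and
`⟨S(f), N(f)⁻¹ S(f)⟩ ≠ 0`, then `μ'(f) = 1 / ⟨S(f), N(f)⁻¹ S(f)⟩` and,
with `h(f) = H(k f)`, `h''(f) = μ'(f)`. -/
theorem deriv_mu_eq_inv_SNinvS {N : ℕ}
    (F H : EuclideanSpace ℝ (Fin N) → ℝ)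
    (hF : ContDiff ℝ 2 F) (hH : ContDiff ℝ 2 H)
    (k : ℝ → EuclideanSpace ℝ (Fin N)) (hk : Differentiable ℝ k)
    (mu : ℝ → ℝ) (hmu : Differentiable ℝ mu)
    (a b : ℝ)
    (hLag : ∀ f ∈ Set.Ioo a b, gradient H (k f) = mu f • gradient F (k f))
    (hcon : ∀ f ∈ Set.Ioo a b, F (k f) = f) :
    ∀ f ∈ Set.Ioo a b,
      (hessianMatrix (fun x => H x - mu f * F x) (k f)).det ≠ 0 →
      dotProduct (toVec (gradient F (k f)))
          ((hessianMatrix (fun x => H x - mu f * F x) (k f))⁻¹.mulVec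
            (toVec (gradient F (k f)))) ≠ 0 →
      deriv mu f =
        1 / dotProduct (toVec (gradient F (k f)))
          ((hessianMatrix (fun x => H x - mu f * F x) (k f))⁻¹.mulVec
            (toVec (gradient F (k f)))) ∧
      deriv (deriv (fun s => H (k s))) f = deriv mu f := by
  intro f₀ hf₀ hdet hQ
  have hFd : Differentiable ℝ F := hF.differentiable (by norm_num)
  have hHd : Differentiable ℝ H := hH.differentiable (by norm_num)
  have hmem : Set.Ioo a b ∈ nhds f₀ := isOpen_Ioo.mem_nhds hf₀
  set x := k f₀ with hx
  set c := mu f₀ with hc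
  set μ' := deriv mu f₀ with hμ'
  set k' := deriv k f₀ with hk'
  set G : EuclideanSpace ℝ (Fin N) → ℝ := fun y => H y - c * F y with hGdef
  have hG : ContDiff ℝ 2 G := hH.sub (contDiff_const.mul hF)
  set M := hessianMatrix G x with hM
  set S : Fin N → ℝ := toVec (gradient F x) with hS
  -- Step 1: derivative of the constraint
  have key1 : ∀ s ∈ Set.Ioo a b, fderiv ℝ F (k s) (deriv k s) = 1 := by
    intro s hs
    have hks : HasDerivAt k (deriv k s) s := (hk s).hasDerivAt
    have hFk : HasDerivAt (fun t => F (k t)) (fderiv ℝ F (k s) (deriv k s)) s :=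
      (hFd (k s)).hasFDerivAt.comp_hasDerivAt s hks
    have hev : (fun t => F (k t)) =ᶠ[nhds s] fun t => t :=
      Filter.eventually_of_mem (isOpen_Ioo.mem_nhds hs) fun t ht => hcon t ht
    have hid : HasDerivAt (fun t => F (k t)) 1 s :=
      (hasDerivAt_id s).congr_of_eventuallyEq hev
    exact hFk.unique hid
  -- dot product of S with k' equals 1
  have hSk : dotProduct (toVec k') S = 1 := by
    have h2 : fderiv ℝ F x k' = 1 := key1 f₀ hf₀
    rw [fderiv_eq_inner'] at h2
    have h1 : (⟪gradient F x, k'⟫_ℝ) = ∑ i, (gradient F x) i * k' i := by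
      rw [PiLp.inner_apply]; simp only [RCLike.inner_apply, conj_trivial]
      exact Finset.sum_congr rfl fun i _ => mul_comm _ _
    rw [dotProduct, ← h2, h1]
    exact Finset.sum_congr rfl fun i _ => mul_comm _ _
  -- Step 2: differentiate the Lagrange condition
  have hdHg : Differentiable ℝ (gradient H) := differentiable_gradient' hH
  have hdFg : Differentiable ℝ (gradient F) := differentiable_gradient' hF
  have hks : HasDerivAt k k' f₀ := (hk f₀).hasDerivAt
  have hDgH : HasDerivAt (fun f => gradient H (k f)) (fderiv ℝ (gradient H) x k') f₀ :=
    (hdHg x).hasFDerivAt.comp_hasDerivAt f₀ hks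
  have hDgF : HasDerivAt (fun f => gradient F (k f)) (fderiv ℝ (gradient F) x k') f₀ :=
    (hdFg x).hasFDerivAt.comp_hasDerivAt f₀ hks
  have hDsm : HasDerivAt (fun f => mu f • gradient F (k f))
      (c • fderiv ℝ (gradient F) x k' + μ' • gradient F x) f₀ :=
    ((hmu f₀).hasDerivAt).smul hDgF
  have hΦ : HasDerivAt (fun f => gradient H (k f) - mu f • gradient F (k f))
      (fderiv ℝ (gradient H) x k'
        - (c • fderiv ℝ (gradient F) x k' + μ' • gradient F x)) f₀ :=
    hDgH.sub hDsm
  have hzero : HasDerivAt (fun f => gradient H (k f) - mu f • gradient F (k f))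
      (0 : EuclideanSpace ℝ (Fin N)) f₀ := by
    have hev : (fun f => gradient H (k f) - mu f • gradient F (k f))
        =ᶠ[nhds f₀] fun _ => (0 : EuclideanSpace ℝ (Fin N)) :=
      Filter.eventually_of_mem hmem fun s hs => by
        show gradient H (k s) - mu s • gradient F (k s) = 0
        rw [hLag s hs, sub_self]
    exact (hasDerivAt_const f₀ (0 : EuclideanSpace ℝ (Fin N))).congr_of_eventuallyEq hev
  have heq0 : fderiv ℝ (gradient H) x k'
      - (c • fderiv ℝ (gradient F) x k' + μ' • gradient F x) = 0 := hΦ.unique hzero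
  -- derivative of gradient of G along k'
  have hgradG : gradient G = fun y => gradient H y - c • gradient F y := by
    funext y
    exact gradient_sub_smul' hHd hFd c y
  have hfderivG : fderiv ℝ (gradient G) x k' = μ' • gradient F x := by
    rw [hgradG]
    rw [fderiv_fun_sub (g := fun y => c • gradient F y) (hdHg x) ((hdFg x).const_smul c), fderiv_fun_const_smul (hdFg x) c]
    have : fderiv ℝ (gradient H) x k' - c • fderiv ℝ (gradient F) x k' = μ' • gradient F x := by
      have := heq0
      abel_nf at this ⊢
      linear_combination (norm := module) this
    simpa using this
  -- matrix form
  have hvm : Matrix.vecMul (toVec k') M = μ' • S := by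
    funext j
    rw [← hess_row' hG x k' j, hfderivG]
    rfl
  have hMunit : IsUnit M.det := isUnit_iff_ne_zero.mpr hdet
  have hMinv : M * M⁻¹ = 1 := Matrix.mul_nonsing_inv M hMunit
  set Q := dotProduct S (M⁻¹.mulVec S) with hQdef
  have hmain : μ' * Q = 1 := by
    calc μ' * Q = dotProduct (μ' • S) (M⁻¹.mulVec S) := by
          rw [smul_dotProduct]; rfl
      _ = dotProduct (Matrix.vecMul (toVec k') M) (M⁻¹.mulVec S) := by rw [hvm]
      _ = dotProduct (toVec k') (M.mulVec (M⁻¹.mulVec S)) :=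
          (Matrix.dotProduct_mulVec _ _ _).symm
      _ = dotProduct (toVec k') S := by
          rw [Matrix.mulVec_mulVec, hMinv, Matrix.one_mulVec]
      _ = 1 := hSk
  constructor
  · rw [eq_div_iff hQ]
    exact hmain
  · -- second part
    have hmuS : ∀ s ∈ Set.Ioo a b, deriv (fun t => H (k t)) s = mu s := by
      intro s hs
      have hks' : HasDerivAt k (deriv k s) s := (hk s).hasDerivAt
      have hHk : HasDerivAt (fun t => H (k t)) (fderiv ℝ H (k s) (deriv k s)) s :=
        (hHd (k s)).hasFDerivAt.comp_hasDerivAt s hks'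
      rw [hHk.deriv, fderiv_eq_inner', hLag s hs, real_inner_smul_left,
        ← fderiv_eq_inner', key1 s hs, mul_one]
    have hev : deriv (fun t => H (k t)) =ᶠ[nhds f₀] mu :=
      Filter.eventually_of_mem hmem fun s hs => hmuS s hs
    exact hev.deriv_eq
end

section
/- Let F, H : ℝ^N → ℝ be twice continuously differentiable, k : ℝ → ℝ^N a differentiable curve and λ : ℝ → ℝ a differentiable function such that for all h in an open interval I: ∇F(k(h)) = λ(h) · ∇H(k(h)) and H(k(h)) = h. Let M(h) be the Hessian of F − λ(h)·H at k(h) and R(h) = ∇H(k(h)). If M(h) is invertible and ⟨R(h), adj(M(h)) · R(h)⟩ ≠ 0, then k'(h) = (adj(M(h)) · R(h)) / ⟨R(h), adj(M(h)) · R(h)⟩, where adj denotes the adjugate matrix. -/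
private lemma euclid_decomp {N : ℕ} (v : EuclideanSpace ℝ (Fin N)) :
    v = ∑ i, v i • EuclideanSpace.single i (1 : ℝ) := by
  have h := (EuclideanSpace.basisFun (Fin N) ℝ).sum_repr v
  simp only [EuclideanSpace.basisFun_apply, EuclideanSpace.basisFun_repr] at h
  exact h.symm

private lemma clm_expand {N : ℕ} (L : EuclideanSpace ℝ (Fin N) →L[ℝ] ℝ)
    (v : EuclideanSpace ℝ (Fin N)) :
    L v = ∑ i, v i * L (EuclideanSpace.single i (1 : ℝ)) := by
  conv_lhs => rw [euclid_decomp v]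
  simp [map_sum, smul_eq_mul]

private lemma gradient_component {N : ℕ} (f : EuclideanSpace ℝ (Fin N) → ℝ)
    (x : EuclideanSpace ℝ (Fin N)) (j : Fin N) :
    (gradient f x) j = fderiv ℝ f x (EuclideanSpace.single j 1) := by
  have h1 : (inner ℝ (gradient f x) (EuclideanSpace.single j (1:ℝ)) : ℝ)
      = fderiv ℝ f x (EuclideanSpace.single j 1) := by
    rw [gradient]
    exact InnerProductSpace.toDual_symm_apply
  have h2 : (inner ℝ (gradient f x) (EuclideanSpace.single j (1:ℝ)) : ℝ)
      = (gradient f x) j := by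
    rw [EuclideanSpace.inner_single_right]
    simp
  rw [← h1, h2]

/-- Along an h-parametrized Lagrange solution curve
(`∇F(k h) = λ(h) • ∇H(k h)` and `H(k h) = h`), with `M(h)` the Hessian of
`F − λ(h)·H` at `k h` and `R(h) = ∇H(k h)`, if `M(h)` is invertible and
`⟨R(h), adj(M(h))·R(h)⟩ ≠ 0`, then
`k'(h) = (adj(M(h))·R(h)) / ⟨R(h), adj(M(h))·R(h)⟩`. -/
theorem deriv_k_eq_adjugate_formula {N : ℕ}
    (F H : EuclideanSpace ℝ (Fin N) → ℝ)
    (hF : ContDiff ℝ 2 F) (hH : ContDiff ℝ 2 H)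
    (k : ℝ → EuclideanSpace ℝ (Fin N)) (hk : Differentiable ℝ k)
    (lam : ℝ → ℝ) (hlam : Differentiable ℝ lam)
    (a b : ℝ)
    (hLag : ∀ h ∈ Set.Ioo a b, gradient F (k h) = lam h • gradient H (k h))
    (hcon : ∀ h ∈ Set.Ioo a b, H (k h) = h) :
    ∀ h ∈ Set.Ioo a b,
      (hessianMatrix (fun x => F x - lam h * H x) (k h)).det ≠ 0 →
      dotProduct (toVec (gradient H (k h)))
          ((hessianMatrix (fun x => F x - lam h * H x) (k h)).adjugate.mulVec
            (toVec (gradient H (k h)))) ≠ 0 →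
      deriv k h =
        (dotProduct (toVec (gradient H (k h)))
            ((hessianMatrix (fun x => F x - lam h * H x) (k h)).adjugate.mulVec
              (toVec (gradient H (k h)))))⁻¹ •
          (hessianMatrix (fun x => F x - lam h * H x) (k h)).adjugate.mulVec
            (toVec (gradient H (k h))) := by
  intro h0 hh0 hdet hdot
  classical
  set x : EuclideanSpace ℝ (Fin N) := k h0 with hx
  set G : EuclideanSpace ℝ (Fin N) → ℝ := fun x => F x - lam h0 * H x with hG
  set M : Matrix (Fin N) (Fin N) ℝ := hessianMatrix G x with hM
  set R : Fin N → ℝ := toVec (gradient H x) with hR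
  set v : Fin N → ℝ := toVec (deriv k h0) with hv
  have hFd : Differentiable ℝ F := hF.differentiable (by norm_num)
  have hHd : Differentiable ℝ H := hH.differentiable (by norm_num)
  have hGc : ContDiff ℝ 2 G := hF.sub (contDiff_const.mul hH)
  have hGd : Differentiable ℝ G := hGc.differentiable (by norm_num)
  have hFd1 : Differentiable ℝ (fderiv ℝ F) :=
    (hF.fderiv_right (m := 1) (by norm_num)).differentiable one_ne_zero
  have hHd1 : Differentiable ℝ (fderiv ℝ H) :=
    (hH.fderiv_right (m := 1) (by norm_num)).differentiable one_ne_zero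
  have hGd1 : Differentiable ℝ (fderiv ℝ G) :=
    (hGc.fderiv_right (m := 1) (by norm_num)).differentiable one_ne_zero
  -- key derivative computation along the curve
  have keyDeriv : ∀ (f : EuclideanSpace ℝ (Fin N) → ℝ),
      Differentiable ℝ (fderiv ℝ f) → ∀ j : Fin N,
      HasDerivAt (fun h => fderiv ℝ f (k h) (EuclideanSpace.single j 1))
        (∑ i, v i * hessianMatrix f x i j) h0 := by
    intro f hf1 j
    set g : EuclideanSpace ℝ (Fin N) → ℝ :=
      fun y => fderiv ℝ f y (EuclideanSpace.single j 1) with hg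
    have hgd : Differentiable ℝ g := fun y =>
      (hf1 y).clm_apply (differentiableAt_const _)
    have hcomp : HasDerivAt (fun h => g (k h)) (fderiv ℝ g x (deriv k h0)) h0 :=
      (hgd x).hasFDerivAt.comp_hasDerivAt h0 (hk h0).hasDerivAt
    have hexp : fderiv ℝ g x (deriv k h0) = ∑ i, v i * hessianMatrix f x i j := by
      rw [clm_expand]
      rfl
    rw [hexp] at hcomp
    exact hcomp
  -- Lagrange condition componentwise
  have hLagC : ∀ j : Fin N, ∀ h ∈ Set.Ioo a b,
      fderiv ℝ F (k h) (EuclideanSpace.single j 1)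
        = lam h * fderiv ℝ H (k h) (EuclideanSpace.single j 1) := by
    intro j h hh
    have := congrArg (fun w : EuclideanSpace ℝ (Fin N) => w j) (hLag h hh)
    simpa [gradient_component] using this
  -- derivative of the Lagrange condition
  have keyEq : ∀ j : Fin N, ∑ i, v i * hessianMatrix F x i j
      = deriv lam h0 * R j + lam h0 * ∑ i, v i * hessianMatrix H x i j := by
    intro j
    have hDF := keyDeriv F hFd1 j
    have hDH := keyDeriv H hHd1 j
    have hrhs : HasDerivAt (fun h => lam h * fderiv ℝ H (k h) (EuclideanSpace.single j 1))
        (deriv lam h0 * fderiv ℝ H x (EuclideanSpace.single j 1)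
          + lam h0 * ∑ i, v i * hessianMatrix H x i j) h0 :=
      (hlam h0).hasDerivAt.mul hDH
    have hev : (fun h => fderiv ℝ F (k h) (EuclideanSpace.single j 1))
        =ᶠ[nhds h0] fun h => lam h * fderiv ℝ H (k h) (EuclideanSpace.single j 1) :=
      Filter.eventually_of_mem (isOpen_Ioo.mem_nhds hh0) (hLagC j)
    have hDF' := hrhs.congr_of_eventuallyEq hev
    have heq := hDF.unique hDF'
    rw [heq]
    congr 2
    rw [hR, toVec, gradient_component]
  -- entries of M
  have hfderivG : ∀ y, fderiv ℝ G y = fderiv ℝ F y - lam h0 • fderiv ℝ H y := by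
    intro y
    rw [hG]
    rw [fderiv_fun_sub (hFd y) ((hHd y).const_mul _), fderiv_const_mul (hHd y)]
  have hMentry : ∀ i j, M i j
      = hessianMatrix F x i j - lam h0 * hessianMatrix H x i j := by
    intro i j
    have hfun : (fun y => fderiv ℝ G y (EuclideanSpace.single j 1))
        = fun y => fderiv ℝ F y (EuclideanSpace.single j 1)
            - lam h0 * fderiv ℝ H y (EuclideanSpace.single j 1) := by
      funext y
      rw [hfderivG y]
      simp
    have hgF : DifferentiableAt ℝ
        (fun y => fderiv ℝ F y (EuclideanSpace.single j 1)) x :=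
      (hFd1 x).clm_apply (differentiableAt_const _)
    have hgH : DifferentiableAt ℝ
        (fun y => fderiv ℝ H y (EuclideanSpace.single j 1)) x :=
      (hHd1 x).clm_apply (differentiableAt_const _)
    show fderiv ℝ (fun y => fderiv ℝ G y (EuclideanSpace.single j 1)) x
        (EuclideanSpace.single i 1) = _
    rw [hfun, fderiv_fun_sub hgF (hgH.const_mul _), fderiv_const_mul hgH]
    rfl
  -- symmetry of M
  have hMsnd : ∀ i j : Fin N, M i j
      = fderiv ℝ (fderiv ℝ G) x (EuclideanSpace.single i 1) (EuclideanSpace.single j 1) := by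
    intro i j
    show fderiv ℝ (fun y => fderiv ℝ G y (EuclideanSpace.single j 1)) x
        (EuclideanSpace.single i 1) = _
    rw [fderiv_clm_apply (hGd1 x) (differentiableAt_const _)]
    simp
  have hsym : ∀ i j, M i j = M j i := by
    intro i j
    rw [hMsnd i j, hMsnd j i]
    exact second_derivative_symmetric (fun y => (hGd y).hasFDerivAt)
      (hGd1 x).hasFDerivAt _ _
  -- M ⬝ v = λ' • R
  have hMv : M.mulVec v = deriv lam h0 • R := by
    funext j
    show ∑ i, M j i * v i = deriv lam h0 * R j
    calc ∑ i, M j i * v i = ∑ i, v i * M i j := by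
          apply Finset.sum_congr rfl
          intro i _
          rw [hsym j i, mul_comm]
      _ = (∑ i, v i * hessianMatrix F x i j)
            - lam h0 * ∑ i, v i * hessianMatrix H x i j := by
          simp only [hMentry, mul_sub, Finset.mul_sum]
          rw [Finset.sum_sub_distrib]
          congr 1
          apply Finset.sum_congr rfl
          intro i _
          ring
      _ = deriv lam h0 * R j := by rw [keyEq j]; ring
  -- constraint derivative: ⟨R, v⟩ = 1
  have hRv : dotProduct R v = 1 := by
    have hcomp : HasDerivAt (fun h => H (k h)) (fderiv ℝ H x (deriv k h0)) h0 :=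
      (hHd x).hasFDerivAt.comp_hasDerivAt h0 (hk h0).hasDerivAt
    have hev : (fun h => H (k h)) =ᶠ[nhds h0] fun h => h :=
      Filter.eventually_of_mem (isOpen_Ioo.mem_nhds hh0) hcon
    have hid : HasDerivAt (fun h : ℝ => h) 1 h0 := hasDerivAt_id h0
    have heq := hcomp.unique (hid.congr_of_eventuallyEq hev)
    rw [clm_expand] at heq
    rw [dotProduct, ← heq]
    apply Finset.sum_congr rfl
    intro i _
    rw [hR, toVec, gradient_component, mul_comm]
    rfl
  -- final algebra
  set w : Fin N → ℝ := M.adjugate.mulVec R with hw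
  have h1 : M.det • v = deriv lam h0 • w := by
    have e1 : M.adjugate.mulVec (M.mulVec v) = M.det • v := by
      rw [Matrix.mulVec_mulVec, Matrix.adjugate_mul, Matrix.smul_mulVec,
        Matrix.one_mulVec]
    rw [← e1, hMv, Matrix.mulVec_smul]
  have h2 : M.det = deriv lam h0 * dotProduct R w := by
    have := congrArg (fun u => dotProduct R u) h1
    simpa [dotProduct_smul, smul_eq_mul, hRv] using this
  have hld : deriv lam h0 * dotProduct R w ≠ 0 := h2 ▸ hdet
  have hlam' : deriv lam h0 ≠ 0 := fun h => hld (by rw [h, zero_mul])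
  have hvec : v = (dotProduct R w)⁻¹ • w := by
    have h4 : ((deriv lam h0 * dotProduct R w)⁻¹
        * (deriv lam h0 * dotProduct R w)) • v
        = (deriv lam h0 * dotProduct R w)⁻¹ • (deriv lam h0 • w) := by
      rw [mul_smul, ← h2, h1]
    rw [inv_mul_cancel₀ hld, one_smul] at h4
    rw [h4, smul_smul]
    congr 1
    field_simp
  exact hvec
end

section
/- Let F, H : ℝ^N → ℝ be twice continuously differentiable, k : ℝ → ℝ^N a differentiable curve and λ : ℝ → ℝ a differentiable function such that for all h in an open interval I: ∇F(k(h)) = λ(h) · ∇H(k(h)) and H(k(h)) = h. Let M(h) be the Hessian of F − λ(h)·H at k(h). If at some point h₀ ∈ I the multiplier has a critical point, λ'(h₀) = 0, then the Hessian matrix M(h₀) is singular: det(M(h₀)) = 0. -/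
/-- Along an h-parametrized Lagrange solution curve
(`∇F(k h) = λ(h) • ∇H(k h)` and `H(k h) = h`), if the multiplier has a critical
point `λ'(h₀) = 0` at some `h₀` in the interval, then the Hessian `M(h₀)` of
`F − λ(h₀)·H` at `k h₀` is singular: `det M(h₀) = 0`. -/
theorem det_hessian_eq_zero_at_multiplier_critical_point {N : ℕ}
    (F H : EuclideanSpace ℝ (Fin N) → ℝ)
    (hF : ContDiff ℝ 2 F) (hH : ContDiff ℝ 2 H)
    (k : ℝ → EuclideanSpace ℝ (Fin N)) (hk : Differentiable ℝ k)
    (lam : ℝ → ℝ) (hlam : Differentiable ℝ lam)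
    (a b : ℝ)
    (hLag : ∀ h ∈ Set.Ioo a b, gradient F (k h) = lam h • gradient H (k h))
    (hcon : ∀ h ∈ Set.Ioo a b, H (k h) = h)
    (h₀ : ℝ) (hh₀ : h₀ ∈ Set.Ioo a b) (hcrit : deriv lam h₀ = 0) :
    (hessianMatrix (fun x => F x - lam h₀ * H x) (k h₀)).det = 0 := by
  obtain ⟨ha, hb⟩ := hh₀
  set x₀ := k h₀ with hx₀
  set G : EuclideanSpace ℝ (Fin N) → ℝ := fun x => F x - lam h₀ * H x with hGdef
  have hGc : ContDiff ℝ 2 G := hF.sub (contDiff_const.mul hH)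
  have hFd : Differentiable ℝ F := hF.differentiable two_ne_zero
  have hHd : Differentiable ℝ H := hH.differentiable two_ne_zero
  -- derivative of k at h₀
  set v := deriv k h₀ with hvdef
  have hk' : HasDerivAt k v h₀ := (hk h₀).hasDerivAt
  -- fderiv H x₀ v = 1, from the constraint
  have hmem : Set.Ioo a b ∈ nhds h₀ := Ioo_mem_nhds ha hb
  have hHk : HasDerivAt (fun h => H (k h)) (fderiv ℝ H x₀ v) h₀ :=
    (hHd x₀).hasFDerivAt.comp_hasDerivAt h₀ hk'
  have hHv : fderiv ℝ H x₀ v = 1 := by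
    have h1 : HasDerivAt (fun h : ℝ => h) (fderiv ℝ H x₀ v) h₀ := by
      refine hHk.congr_of_eventuallyEq ?_
      filter_upwards [hmem] with h hh using (hcon h hh).symm
    exact h1.unique (hasDerivAt_id h₀)
  have hvne : v ≠ 0 := by
    intro h0
    rw [h0, map_zero] at hHv
    exact zero_ne_one hHv
  -- second derivative of G
  have hΦ : ContDiff ℝ 1 (fderiv ℝ G) := hGc.fderiv_right (by norm_num)
  set B := fderiv ℝ (fderiv ℝ G) x₀ with hBdef
  have hΦk : HasDerivAt (fun h => fderiv ℝ G (k h)) (B v) h₀ :=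
    ((hΦ.differentiable one_ne_zero) x₀).hasFDerivAt.comp_hasDerivAt h₀ hk'
  have hsym : ∀ y z, B y z = B z y := fun y z =>
    (hGc.contDiffAt.isSymmSndFDerivAt (by simp)) y z
  -- the key vanishing: B v e = 0 for every vector e
  have hBv : ∀ e : EuclideanSpace ℝ (Fin N), B v e = 0 := by
    intro e
    -- g h = fderiv G (k h) e
    have hg : HasDerivAt (fun h => fderiv ℝ G (k h) e) (B v e) h₀ :=
      ((ContinuousLinearMap.apply ℝ ℝ e).hasFDerivAt).comp_hasDerivAt h₀ hΦk
    -- ψ h = fderiv H (k h) e is differentiable at h₀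
    have hψd : DifferentiableAt ℝ (fun h => fderiv ℝ H (k h) e) h₀ := by
      have h1 : ContDiff ℝ 1 (fderiv ℝ H) := hH.fderiv_right (by norm_num)
      exact ((ContinuousLinearMap.apply ℝ ℝ e).differentiable.differentiableAt).comp h₀
        (((h1.differentiable one_ne_zero) x₀).comp h₀ (hk h₀))
    -- the alternative formula on the interval
    have heq : ∀ h ∈ Set.Ioo a b,
        fderiv ℝ G (k h) e = (lam h - lam h₀) * fderiv ℝ H (k h) e := by
      intro h hh
      have hfd : fderiv ℝ G (k h) = fderiv ℝ F (k h) - lam h₀ • fderiv ℝ H (k h) := by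
        rw [hGdef]
        rw [fderiv_fun_sub (hFd (k h)) ((hHd (k h)).const_mul (lam h₀)),
          fderiv_const_mul (hHd (k h)) (lam h₀)]
      have hFe : fderiv ℝ F (k h) e = lam h * fderiv ℝ H (k h) e := by
        have e1 : fderiv ℝ F (k h) e = (inner ℝ (gradient F (k h)) e : ℝ) :=
          (InnerProductSpace.toDual_symm_apply).symm
        have e2 : fderiv ℝ H (k h) e = (inner ℝ (gradient H (k h)) e : ℝ) :=
          (InnerProductSpace.toDual_symm_apply).symm
        rw [e1, e2, hLag h hh, real_inner_smul_left]
      rw [hfd]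
      simp [hFe]
      ring
    -- derivative of the alternative formula at h₀ is 0
    have hrhs : HasDerivAt (fun h => (lam h - lam h₀) * fderiv ℝ H (k h) e) 0 h₀ := by
      have h1 : HasDerivAt (fun h => lam h - lam h₀) (deriv lam h₀) h₀ :=
        ((hlam h₀).hasDerivAt).sub_const (lam h₀)
      have h2 := h1.fun_mul hψd.hasDerivAt
      simpa [hcrit] using h2
    have hg0 : HasDerivAt (fun h => fderiv ℝ G (k h) e) 0 h₀ := by
      refine hrhs.congr_of_eventuallyEq ?_
      filter_upwards [hmem] with h hh using heq h hh
    exact hg.unique hg0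
  -- conclude via mulVec
  set w : Fin N → ℝ := fun j => v j with hwdef
  have hwne : w ≠ 0 := by
    intro h0
    apply hvne
    ext j
    exact congrFun h0 j
  have hsum : ∑ j, w j • (EuclideanSpace.single j 1 : EuclideanSpace ℝ (Fin N)) = v := by
    simpa [EuclideanSpace.basisFun_apply, EuclideanSpace.basisFun_repr]
      using (EuclideanSpace.basisFun (Fin N) ℝ).sum_repr v
  have hmv : (hessianMatrix G x₀).mulVec w = 0 := by
    funext i
    set e : Fin N → EuclideanSpace ℝ (Fin N) := fun j => EuclideanSpace.single j 1 with hedef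
    have hMij : ∀ j, hessianMatrix G x₀ i j = B (e i) (e j) := by
      intro j
      have hc : DifferentiableAt ℝ (fderiv ℝ G) x₀ := (hΦ.differentiable one_ne_zero) x₀
      have := fderiv_clm_apply hc (differentiableAt_const (e j))
      simp only [hessianMatrix, Matrix.of_apply]
      rw [this]
      simp [hedef, hBdef]
    have : (hessianMatrix G x₀).mulVec w i = B (e i) v := by
      simp only [Matrix.mulVec, dotProduct]
      calc ∑ j, hessianMatrix G x₀ i j * w j
          = ∑ j, B (e i) (w j • e j) := by
            refine Finset.sum_congr rfl fun j _ => ?_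
            rw [hMij j, map_smul]
            simp [mul_comm]
        _ = B (e i) (∑ j, w j • e j) := by rw [map_sum]
        _ = B (e i) v := by rw [hedef, hsum]
    rw [this, hsym (e i) v, hBv (e i)]
    rfl
  exact Matrix.exists_mulVec_eq_zero_iff.mp ⟨w, hwne, hmv⟩
end

section
/- Let F, H : ℝ^N → ℝ be twice continuously differentiable and let k : ℝ → ℝ^N be a differentiable curve with ∇F(k(λ)) = λ · ∇H(k(λ)) for all λ in an open interval I. Suppose the Hessian M(λ) of F − λH at k(λ) is invertible and write R(λ) = ∇H(k(λ)). Then, setting h(λ) = H(k(λ)) and f(λ) = F(k(λ)), one has h'(λ) = ⟨R(λ), M(λ)⁻¹ R(λ)⟩ and f'(λ) = λ · ⟨R(λ), M(λ)⁻¹ R(λ)⟩ for all λ ∈ I. -/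
private lemma clm_eval_eq_sum {N : ℕ} (L : EuclideanSpace ℝ (Fin N) →L[ℝ] ℝ)
    (v : EuclideanSpace ℝ (Fin N)) :
    L v = ∑ i, v i * L (EuclideanSpace.single i 1) := by
  have hv := ((EuclideanSpace.basisFun (Fin N) ℝ).sum_repr v).symm
  simp only [EuclideanSpace.basisFun_apply, EuclideanSpace.basisFun_repr] at hv
  conv_lhs => rw [hv]
  simp [smul_eq_mul]

private lemma grad_apply {N : ℕ} (G : EuclideanSpace ℝ (Fin N) → ℝ)
    (x : EuclideanSpace ℝ (Fin N)) (j : Fin N) :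
    gradient G x j = fderiv ℝ G x (EuclideanSpace.single j 1) := by
  have h1 : (inner ℝ (gradient G x) (EuclideanSpace.single j (1:ℝ)) : ℝ)
      = fderiv ℝ G x (EuclideanSpace.single j 1) := by
    rw [gradient, InnerProductSpace.toDual_symm_apply]
  rw [← h1, EuclideanSpace.inner_single_right]
  simp

/-- Along a λ-parametrized Lagrange solution curve
`∇F(k λ) = λ • ∇H(k λ)` with invertible Hessian `M(λ)` of `F − λH` at `k λ` and
`R(λ) = ∇H(k λ)`, the values `h(λ) = H(k λ)` and `f(λ) = F(k λ)` satisfy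
`h'(λ) = ⟨R(λ), M(λ)⁻¹ R(λ)⟩` and `f'(λ) = λ · ⟨R(λ), M(λ)⁻¹ R(λ)⟩`. -/
theorem deriv_h_and_f_along_lambda_curve {N : ℕ}
    (F H : EuclideanSpace ℝ (Fin N) → ℝ)
    (hF : ContDiff ℝ 2 F) (hH : ContDiff ℝ 2 H)
    (k : ℝ → EuclideanSpace ℝ (Fin N)) (hk : Differentiable ℝ k)
    (a b : ℝ)
    (hLag : ∀ l ∈ Set.Ioo a b, gradient F (k l) = l • gradient H (k l))
    (hinv : ∀ l ∈ Set.Ioo a b,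
      (hessianMatrix (fun x => F x - l * H x) (k l)).det ≠ 0) :
    ∀ l ∈ Set.Ioo a b,
      deriv (fun s => H (k s)) l =
        dotProduct (toVec (gradient H (k l)))
          ((hessianMatrix (fun x => F x - l * H x) (k l))⁻¹.mulVec
            (toVec (gradient H (k l)))) ∧
      deriv (fun s => F (k s)) l =
        l * dotProduct (toVec (gradient H (k l)))
          ((hessianMatrix (fun x => F x - l * H x) (k l))⁻¹.mulVec
            (toVec (gradient H (k l)))) := by
  intro l hl
  have hFd : Differentiable ℝ F := hF.differentiable (by norm_num)
  have hHd : Differentiable ℝ H := hH.differentiable (by norm_num)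
  have hF' : Differentiable ℝ (fderiv ℝ F) :=
    (hF.fderiv_right (m := 1) (by norm_num)).differentiable (by norm_num)
  have hH' : Differentiable ℝ (fderiv ℝ H) :=
    (hH.fderiv_right (m := 1) (by norm_num)).differentiable (by norm_num)
  have hkl : HasDerivAt k (deriv k l) l := (hk l).hasDerivAt
  set x := k l with hx
  set c := deriv k l with hc
  set M := hessianMatrix (fun y => F y - l * H y) x with hM
  set R := gradient H x with hRdef
  -- key identity: c ᵥ* M = R
  have key : Matrix.vecMul (toVec c) M = toVec R := by
    funext j
    set e : EuclideanSpace ℝ (Fin N) := EuclideanSpace.single j 1 with he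
    have hφF : Differentiable ℝ (fun y => fderiv ℝ F y e) :=
      hF'.clm_apply (differentiable_const _)
    have hφH : Differentiable ℝ (fun y => fderiv ℝ H y e) :=
      hH'.clm_apply (differentiable_const _)
    -- entries of M
    have hMentry : ∀ i, M i j
        = fderiv ℝ (fun y => fderiv ℝ F y e) x (EuclideanSpace.single i 1)
          - l * fderiv ℝ (fun y => fderiv ℝ H y e) x (EuclideanSpace.single i 1) := by
      intro i
      have hfd : (fun y => fderiv ℝ (fun z => F z - l * H z) y e)
          = fun y => fderiv ℝ F y e - l * fderiv ℝ H y e := by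
        funext y
        rw [fderiv_fun_sub (hFd y) ((hHd y).const_mul l), fderiv_const_mul (hHd y)]
        simp
      rw [hM, hessianMatrix]
      simp only [Matrix.of_apply, ← he]
      rw [hfd, fderiv_fun_sub (hφF x) ((hφH x).const_mul l), fderiv_const_mul (hφH x)]
      simp
    -- the function that vanishes on Ioo a b
    have hzero : ∀ s ∈ Set.Ioo a b,
        fderiv ℝ F (k s) e - s * fderiv ℝ H (k s) e = 0 := by
      intro s hs
      have h1 : gradient F (k s) j = s * gradient H (k s) j := by
        rw [hLag s hs]; simp
      rw [grad_apply, grad_apply] at h1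
      rw [← he] at h1
      rw [h1]; ring
    have hEv : (fun s => fderiv ℝ F (k s) e - s * fderiv ℝ H (k s) e)
        =ᶠ[nhds l] (fun _ => (0:ℝ)) := by
      filter_upwards [Ioo_mem_nhds hl.1 hl.2] with s hs using hzero s hs
    have hd1 : HasDerivAt (fun s => fderiv ℝ F (k s) e)
        (fderiv ℝ (fun y => fderiv ℝ F y e) x c) l :=
      (hφF x).hasFDerivAt.comp_hasDerivAt l hkl
    have hd2 : HasDerivAt (fun s => fderiv ℝ H (k s) e)
        (fderiv ℝ (fun y => fderiv ℝ H y e) x c) l :=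
      (hφH x).hasFDerivAt.comp_hasDerivAt l hkl
    have hd3 : HasDerivAt (fun s => s * fderiv ℝ H (k s) e)
        (1 * fderiv ℝ H x e + l * fderiv ℝ (fun y => fderiv ℝ H y e) x c) l :=
      (hasDerivAt_id l).mul hd2
    have hd : HasDerivAt (fun s => fderiv ℝ F (k s) e - s * fderiv ℝ H (k s) e)
        (fderiv ℝ (fun y => fderiv ℝ F y e) x c
          - (1 * fderiv ℝ H x e + l * fderiv ℝ (fun y => fderiv ℝ H y e) x c)) l :=
      hd1.sub hd3
    have hderiv0 : fderiv ℝ (fun y => fderiv ℝ F y e) x c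
        - (1 * fderiv ℝ H x e + l * fderiv ℝ (fun y => fderiv ℝ H y e) x c) = 0 := by
      rw [← hd.deriv, hEv.deriv_eq]
      simp
    have hRj : toVec R j = fderiv ℝ H x e := by
      rw [toVec, hRdef, grad_apply, he]
    have hsum : Matrix.vecMul (toVec c) M j
        = fderiv ℝ (fun y => fderiv ℝ F y e) x c
          - l * fderiv ℝ (fun y => fderiv ℝ H y e) x c := by
      rw [clm_eval_eq_sum _ c, clm_eval_eq_sum _ c, Finset.mul_sum,
        ← Finset.sum_sub_distrib]
      rw [Matrix.vecMul, dotProduct]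
      congr 1
      funext i
      rw [hMentry i]
      show (c : Fin N → ℝ) i * _ = _
      ring
    rw [hsum, hRj]
    linarith [hderiv0]
  have hMunit : IsUnit M.det := isUnit_iff_ne_zero.mpr (hinv l hl)
  have hback : Matrix.vecMul (toVec R) M⁻¹ = toVec c := by
    rw [← key, Matrix.vecMul_vecMul, Matrix.mul_nonsing_inv _ hMunit,
      Matrix.vecMul_one]
  have hdot : dotProduct (toVec R) (M⁻¹.mulVec (toVec R))
      = dotProduct (toVec c) (toVec R) := by
    rw [Matrix.dotProduct_mulVec, hback]
  have hDH : HasDerivAt (fun s => H (k s)) (fderiv ℝ H x c) l :=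
    (hHd x).hasFDerivAt.comp_hasDerivAt l hkl
  have hDF : HasDerivAt (fun s => F (k s)) (fderiv ℝ F x c) l :=
    (hFd x).hasFDerivAt.comp_hasDerivAt l hkl
  have hHval : fderiv ℝ H x c = dotProduct (toVec c) (toVec R) := by
    rw [clm_eval_eq_sum _ c, dotProduct]
    congr 1
    funext i
    show c i * fderiv ℝ H x (EuclideanSpace.single i 1) = c i * gradient H x i
    rw [grad_apply]
  have hFval : fderiv ℝ F x c = l * dotProduct (toVec c) (toVec R) := by
    rw [clm_eval_eq_sum _ c, dotProduct, Finset.mul_sum]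
    congr 1
    funext i
    have : fderiv ℝ F x (EuclideanSpace.single i 1) = l * toVec R i := by
      rw [← grad_apply, hLag l hl]
      simp [toVec, hRdef, hx]
    rw [this]
    simp only [toVec]
    ring
  refine ⟨?_, ?_⟩
  · rw [hDH.deriv, hHval, hdot]
  · rw [hDF.deriv, hFval, hdot]
end

section
/- Let F, H : ℝ^N → ℝ be twice continuously differentiable, and let k : ℝ → ℝ^N be a differentiable arclength-parametrized curve (‖k'(s)‖ = 1) together with a function λ : ℝ → ℝ, such that along the curve ∇F(k(s)) = λ(s)·∇H(k(s)). Let M(s) be the Hessian of F − λ(s)·H at k(s), R(s) = ∇H(k(s)), P(s) = adj(M(s))·R(s), and suppose P(s) ≠ 0 and k'(s) = P(s)/‖P(s)‖. Then, setting f(s) = F(k(s)) and h(s) = H(k(s)): h'(s) = ⟨R(s), P(s)⟩ / ‖P(s)‖ and f'(s) = λ(s) · ⟨R(s), P(s)⟩ / ‖P(s)‖. If moreover λ is differentiable and the differentiated Lagrange identity M(s)·k'(s) = λ'(s)·R(s) holds with R(s) ≠ 0, then λ'(s) = det(M(s)) / ‖P(s)‖. -/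
/-- View a plain tuple `Fin N → ℝ` as a vector of Euclidean space `ℝ^N`
(so that `‖·‖` is the Euclidean norm). -/
def ofVec {N : ℕ} (v : Fin N → ℝ) : EuclideanSpace ℝ (Fin N) := WithLp.toLp 2 v

lemma fderiv_eq_inner_gradient {N : ℕ} (f : EuclideanSpace ℝ (Fin N) → ℝ)
    (x v : EuclideanSpace ℝ (Fin N)) :
    fderiv ℝ f x v = (inner ℝ (gradient f x) v : ℝ) := by
  rw [gradient, ← InnerProductSpace.toDual_apply_apply,
    (InnerProductSpace.toDual ℝ (EuclideanSpace ℝ (Fin N))).apply_symm_apply]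

lemma inner_eq_dot {N : ℕ} (v : EuclideanSpace ℝ (Fin N)) (w : Fin N → ℝ) :
    (inner ℝ v (ofVec w) : ℝ) = dotProduct (toVec v) w := by
  simp [PiLp.inner_apply, dotProduct, ofVec, toVec, mul_comm]

/-- Arclength (singularity-free) formulation of the Lagrange
solution path.  If the curve `k` is arclength-parametrized (`‖k'(s)‖ = 1`),
satisfies `∇F(k s) = λ(s) • ∇H(k s)`, and its unit tangent is
`k'(s) = P(s)/‖P(s)‖` with `P(s) = adj(M(s))·R(s) ≠ 0` (where `M(s)` is the
Hessian of `F − λ(s)H` at `k s` and `R(s) = ∇H(k s)`), then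
`h'(s) = ⟨R,P⟩/‖P‖` and `f'(s) = λ(s)·⟨R,P⟩/‖P‖`; moreover, if `λ` is
differentiable and the differentiated Lagrange identity `M·k' = λ'·R` holds
with `R ≠ 0`, then `λ'(s) = det(M)/‖P‖`. -/
theorem arclength_formulation {N : ℕ}
    (F H : EuclideanSpace ℝ (Fin N) → ℝ)
    (hF : ContDiff ℝ 2 F) (hH : ContDiff ℝ 2 H)
    (k : ℝ → EuclideanSpace ℝ (Fin N)) (hk : Differentiable ℝ k)
    (lam : ℝ → ℝ)
    (hunit : ∀ s : ℝ, ‖deriv k s‖ = 1)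
    (hLag : ∀ s : ℝ, gradient F (k s) = lam s • gradient H (k s)) :
    ∀ s : ℝ,
      ofVec ((hessianMatrix (fun x => F x - lam s * H x) (k s)).adjugate.mulVec
          (toVec (gradient H (k s)))) ≠ 0 →
      deriv k s =
        ‖ofVec ((hessianMatrix (fun x => F x - lam s * H x) (k s)).adjugate.mulVec
            (toVec (gradient H (k s))))‖⁻¹ •
          ofVec ((hessianMatrix (fun x => F x - lam s * H x) (k s)).adjugate.mulVec
            (toVec (gradient H (k s)))) →
      (deriv (fun u => H (k u)) s =
          dotProduct (toVec (gradient H (k s)))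
              ((hessianMatrix (fun x => F x - lam s * H x) (k s)).adjugate.mulVec
                (toVec (gradient H (k s)))) /
            ‖ofVec ((hessianMatrix (fun x => F x - lam s * H x) (k s)).adjugate.mulVec
              (toVec (gradient H (k s))))‖ ∧
        deriv (fun u => F (k u)) s =
          lam s *
            (dotProduct (toVec (gradient H (k s)))
                ((hessianMatrix (fun x => F x - lam s * H x) (k s)).adjugate.mulVec
                  (toVec (gradient H (k s)))) /
              ‖ofVec ((hessianMatrix (fun x => F x - lam s * H x) (k s)).adjugate.mulVec
                (toVec (gradient H (k s))))‖) ∧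
        (Differentiable ℝ lam →
          (hessianMatrix (fun x => F x - lam s * H x) (k s)).mulVec (toVec (deriv k s)) =
            deriv lam s • toVec (gradient H (k s)) →
          gradient H (k s) ≠ 0 →
          deriv lam s =
            (hessianMatrix (fun x => F x - lam s * H x) (k s)).det /
              ‖ofVec ((hessianMatrix (fun x => F x - lam s * H x) (k s)).adjugate.mulVec
                (toVec (gradient H (k s))))‖)) := by
  intro s hP hkd
  set M := hessianMatrix (fun x => F x - lam s * H x) (k s) with hM
  set R := gradient H (k s) with hR
  set Pv := M.adjugate.mulVec (toVec R) with hPv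
  have hHd : DifferentiableAt ℝ H (k s) := (hH.differentiable (by norm_num)).differentiableAt
  have hFd : DifferentiableAt ℝ F (k s) := (hF.differentiable (by norm_num)).differentiableAt
  have hderivH : deriv (fun u => H (k u)) s = fderiv ℝ H (k s) (deriv k s) :=
    (hHd.hasFDerivAt.comp_hasDerivAt s (hk s).hasDerivAt).deriv
  have hderivF : deriv (fun u => F (k u)) s = fderiv ℝ F (k s) (deriv k s) :=
    (hFd.hasFDerivAt.comp_hasDerivAt s (hk s).hasDerivAt).deriv
  have hinner : (inner ℝ R (deriv k s) : ℝ) =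
      dotProduct (toVec R) Pv / ‖ofVec Pv‖ := by
    rw [hkd, real_inner_smul_right, inner_eq_dot]
    ring
  refine ⟨?_, ?_, ?_⟩
  · rw [hderivH, fderiv_eq_inner_gradient, ← hR, hinner]
  · rw [hderivF, fderiv_eq_inner_gradient, hLag s, ← hR, real_inner_smul_left, hinner]
  · intro _ hMk hRne
    have hPvne : Pv ≠ 0 := fun h => hP (by rw [h]; rfl)
    have hT : toVec (deriv k s) = ‖ofVec Pv‖⁻¹ • Pv := by rw [hkd]; rfl
    rw [hT] at hMk
    have comb := congrArg (fun w => M.adjugate.mulVec w) hMk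
    simp only [Matrix.mulVec_mulVec, Matrix.mulVec_smul, Matrix.adjugate_mul,
      Matrix.smul_mulVec, Matrix.one_mulVec, ← hPv, smul_smul] at comb
    have := smul_left_injective ℝ hPvne comb
    rw [← this, div_eq_mul_inv]
    ring
end

section
/- Let d ∈ ℝ^N and define H(k) = ‖k − d‖² = Σ_{m=1}^N (k_m − d_m)². Then the Hessian of H at every point equals 2·I (twice the identity matrix), and d is the unique point with ∇H = 0 (the constraint-independent optimum of H). Moreover, if F : ℝ^N → ℝ is C² and k : ℝ → ℝ^N is a differentiable curve with k(0) = d satisfying the conjugate Lagrange condition ∇H(k(μ)) = μ·∇F(k(μ)) for all μ in a neighborhood of 0, then the initial tangent is k'(0) = (1/2)·∇F(d). -/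
open InnerProductSpace

/-- The quadratic constraint `H(k) = ‖k − d‖² = Σ (k_m − d_m)²` measuring the
deviation of the variables from a design point `d`. -/
noncomputable def sqDeviation {N : ℕ} (d : EuclideanSpace ℝ (Fin N))
    (k : EuclideanSpace ℝ (Fin N)) : ℝ :=
  ∑ m : Fin N, (k m - d m) ^ 2

lemma hasFDerivAt_sqDev {N : ℕ} (d x : EuclideanSpace ℝ (Fin N)) :
    HasFDerivAt (sqDeviation d)
      (∑ m : Fin N, (2 * (x m - d m)) •
        (EuclideanSpace.proj m : EuclideanSpace ℝ (Fin N) →L[ℝ] ℝ)) x := by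
  apply HasFDerivAt.fun_sum
  intro m _
  have h : HasFDerivAt (fun k : EuclideanSpace ℝ (Fin N) => k m - d m)
      (EuclideanSpace.proj m : EuclideanSpace ℝ (Fin N) →L[ℝ] ℝ) x :=
    (EuclideanSpace.proj m : EuclideanSpace ℝ (Fin N) →L[ℝ] ℝ).hasFDerivAt.sub_const (d m)
  rw [show (2:ℝ) * (x m - d m) = (x m - d m) + (x m - d m) by ring]
  have := h.mul h
  simp only [pow_two]
  refine this.congr_fderiv ?_
  exact (add_smul _ _ _).symm

lemma hasGradientAt_sqDev {N : ℕ} (d x : EuclideanSpace ℝ (Fin N)) :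
    HasGradientAt (sqDeviation d) ((2 : ℝ) • (x - d)) x := by
  rw [hasGradientAt_iff_hasFDerivAt]
  refine (hasFDerivAt_sqDev d x).congr_fderiv ?_
  ext v
  simp only [toDual_apply_apply, PiLp.inner_apply, RCLike.inner_apply, ContinuousLinearMap.sum_apply,
    ContinuousLinearMap.smul_apply, PiLp.proj_apply, PiLp.smul_apply, PiLp.sub_apply,
    smul_eq_mul, map_mul, conj_trivial]
  exact Finset.sum_congr rfl fun i _ => mul_comm _ _

lemma gradient_sqDev {N : ℕ} (d x : EuclideanSpace ℝ (Fin N)) :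
    gradient (sqDeviation d) x = (2 : ℝ) • (x - d) :=
  (hasGradientAt_sqDev d x).gradient

/-- For `H(k) = Σ (k_m − d_m)²`: the Hessian of `H` is `2·I`
everywhere, `d` is the unique point with `∇H = 0` (the CIO of `H`), and for
any C² objective `F` and differentiable curve `k` with `k 0 = d` satisfying
the conjugate Lagrange condition `∇H(k μ) = μ·∇F(k μ)` near `μ = 0`, the
initial tangent is `k'(0) = (1/2)·∇F(d)`. -/
theorem quadratic_constraint_initial_condition {N : ℕ}
    (d : EuclideanSpace ℝ (Fin N)) :
    (∀ x : EuclideanSpace ℝ (Fin N),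
      hessianMatrix (sqDeviation d) x = (2 : ℝ) • (1 : Matrix (Fin N) (Fin N) ℝ)) ∧
    (∀ x : EuclideanSpace ℝ (Fin N), gradient (sqDeviation d) x = 0 ↔ x = d) ∧
    (∀ F : EuclideanSpace ℝ (Fin N) → ℝ, ContDiff ℝ 2 F →
      ∀ k : ℝ → EuclideanSpace ℝ (Fin N), Differentiable ℝ k → k 0 = d →
        (∀ᶠ μ in nhds (0 : ℝ),
          gradient (sqDeviation d) (k μ) = μ • gradient F (k μ)) →
        deriv k 0 = (1 / 2 : ℝ) • gradient F d) := by
  refine ⟨?_, ?_, ?_⟩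
  · -- Hessian
    intro x
    ext i j
    have hinner : (fun y : EuclideanSpace ℝ (Fin N) =>
        fderiv ℝ (sqDeviation d) y (EuclideanSpace.single j 1))
        = fun y => 2 * (y j - d j) := by
      funext y
      rw [(hasFDerivAt_sqDev d y).fderiv]
      simp [EuclideanSpace.single_apply, mul_ite, Finset.sum_ite_eq']
    have hout : HasFDerivAt (fun y : EuclideanSpace ℝ (Fin N) => 2 * (y j - d j))
        ((2:ℝ) • (EuclideanSpace.proj j : EuclideanSpace ℝ (Fin N) →L[ℝ] ℝ)) x :=
      ((EuclideanSpace.proj j : EuclideanSpace ℝ (Fin N) →L[ℝ] ℝ).hasFDerivAt.sub_const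
        (d j)).const_mul 2
    simp only [hessianMatrix, Matrix.of_apply, hinner, hout.fderiv]
    simp [EuclideanSpace.single_apply, Matrix.smul_apply, Matrix.one_apply, eq_comm]
  · -- unique critical point
    intro x
    rw [gradient_sqDev, smul_eq_zero, sub_eq_zero]
    simp
  · -- initial condition
    intro F hF k hk hk0 hev
    set g : ℝ → EuclideanSpace ℝ (Fin N) := fun μ => gradient F (k μ) with hg
    have hFd : ContDiff ℝ 1 (fderiv ℝ F) := hF.fderiv_right (by norm_num)
    have hgrad : Differentiable ℝ (gradient F) := by
      intro x
      have : DifferentiableAt ℝ (fderiv ℝ F) x := (hFd.differentiable one_ne_zero) x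
      exact ((toDual ℝ (EuclideanSpace ℝ (Fin N))).symm.toContinuousLinearEquiv.differentiable.differentiableAt).comp x this
    have hgdiff : DifferentiableAt ℝ g 0 := (hgrad.comp hk) 0
    have heq : ∀ᶠ μ in nhds (0:ℝ), k μ = d + (μ / 2) • g μ := by
      filter_upwards [hev] with μ hμ
      rw [gradient_sqDev] at hμ
      have : k μ - d = (μ / 2) • g μ := by
        have h2 := congrArg (fun v => (1/2 : ℝ) • v) hμ
        simp only [smul_smul] at h2
        norm_num at h2
        rw [h2]
        congr 1
        ring
      rw [← this]; abel
    have hder : HasDerivAt (fun μ : ℝ => d + (μ / 2) • g μ) ((1/2 : ℝ) • g 0) 0 := by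
      have hc : HasDerivAt (fun μ : ℝ => μ / 2) (1/2 : ℝ) 0 := by
        simpa using (hasDerivAt_id (0:ℝ)).div_const 2
      have := (hc.smul hgdiff.hasDerivAt).const_add d
      simpa using this
    have hkder : HasDerivAt k ((1/2 : ℝ) • g 0) 0 :=
      hder.congr_of_eventuallyEq heq
    rw [hkder.deriv, hg]
    simp [hk0]
end
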